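/- For all natural numbers n: (1 + x·d/dx)^n applied to e^x equals p(x)·e^x where p(x) = Σ_{i=0}^{n} S(n+1, i+1)·x^i, with S the Stirling numbers of the second kind. -/

import Mathlib

open Finset

/-- Stirling numbers of the second kind: `stirling2 n k` is the number of partitions of an
`n`-element set into `k` nonempty blocks. -/
def stirling2 : ℕ → ℕ → ℕ
  | 0, 0 => 1
  | 0, _ + 1 => 0
  | _ + 1, 0 => 0
  | n + 1, k + 1 => (k + 1) * stirling2 n (k + 1) + stirling2 n k

/-- Unsigned Stirling numbers of the first kind: `stirling1 n k` counts permutations of `n`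
elements with exactly `k` disjoint cycles. -/
def stirling1 : ℕ → ℕ → ℕ
  | 0, 0 => 1
  | 0, _ + 1 => 0
  | _ + 1, 0 => 0
  | n + 1, k + 1 => n * stirling1 n (k + 1) + stirling1 n k

/-- The `j`-th elementary symmetric polynomial in `d` variables, evaluated at `a`. -/
def esymm (d j : ℕ) (a : Fin d → ℝ) : ℝ :=
  ∑ s ∈ Finset.powersetCard j (Finset.univ : Finset (Fin d)), ∏ i ∈ s, a i

/-- The operator `x·d/dx` acting on functions. -/
noncomputable def thetaOp (f : ℝ → ℝ) : ℝ → ℝ := fun x => x * deriv f x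

/-- The operator `1 + a·x·d/dx` acting on functions. -/
noncomputable def eulerOp (a : ℝ) (f : ℝ → ℝ) : ℝ → ℝ := fun x => f x + a * x * deriv f x

/-- The composite operator `∏_{i=1}^d (1 + aᵢ·x·d/dx)`. -/
noncomputable def opProd (d : ℕ) (a : Fin d → ℝ) : (ℝ → ℝ) → ℝ → ℝ :=
  (List.ofFn fun i : Fin d => eulerOp (a i)).foldr (· ∘ ·) id

lemma stirling2_eq_zero : ∀ n k : ℕ, n < k → stirling2 n k = 0
  | 0, _ + 1, _ => rfl
  | n + 1, k + 1, h => by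
    have h1 : n < k + 1 := by omega
    have h2 : n < k := by omega
    simp [stirling2, stirling2_eq_zero n (k+1) h1, stirling2_eq_zero n k h2]

lemma step (c : ℕ → ℝ) (m : ℕ) (hc : c m = 0) :
    eulerOp 1 (fun x => (∑ i ∈ range m, c i * x ^ i) * Real.exp x) =
    fun x => (∑ i ∈ range (m + 1),
        ((i + 1 : ℝ) * c i + (if i = 0 then (0:ℝ) else c (i - 1))) * x ^ i) * Real.exp x := by
  funext x
  have hp : HasDerivAt (fun x : ℝ => ∑ i ∈ range m, c i * x ^ i)
      (∑ i ∈ range m, c i * (i * x ^ (i - 1))) x := by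
    apply HasDerivAt.fun_sum
    intro i _
    exact (hasDerivAt_pow i x).const_mul (c i)
  have hf : HasDerivAt (fun x : ℝ => (∑ i ∈ range m, c i * x ^ i) * Real.exp x)
      ((∑ i ∈ range m, c i * (i * x ^ (i - 1))) * Real.exp x +
        (∑ i ∈ range m, c i * x ^ i) * Real.exp x) x := hp.mul (Real.hasDerivAt_exp x)
  simp only [eulerOp, hf.deriv]
  -- algebra
  have key : (∑ i ∈ range m, c i * x ^ i) +
      (x * ∑ i ∈ range m, c i * (i * x ^ (i - 1)) + x * ∑ i ∈ range m, c i * x ^ i) =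
      ∑ i ∈ range (m + 1),
        ((i + 1 : ℝ) * c i + (if i = 0 then (0:ℝ) else c (i - 1))) * x ^ i := by
    have h1 : ∑ i ∈ range (m + 1), (i + 1 : ℝ) * c i * x ^ i =
        (∑ i ∈ range m, c i * x ^ i) + x * ∑ i ∈ range m, c i * (i * x ^ (i - 1)) := by
      rw [Finset.sum_range_succ, hc, Finset.mul_sum]
      have : ∀ i ∈ range m, (i + 1 : ℝ) * c i * x ^ i =
          c i * x ^ i + x * (c i * (i * x ^ (i - 1))) := by
        intro i _
        cases i with
        | zero => simp
        | succ j => push_cast [pow_succ]; ring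
      rw [Finset.sum_congr rfl this, Finset.sum_add_distrib]
      ring
    have h2 : ∑ i ∈ range (m + 1), (if i = 0 then (0:ℝ) else c (i - 1)) * x ^ i =
        x * ∑ i ∈ range m, c i * x ^ i := by
      rw [Finset.sum_range_succ', Finset.mul_sum]
      simp only [if_neg (Nat.succ_ne_zero _), Nat.add_sub_cancel, if_pos rfl, zero_mul, add_zero]
      rw [if_pos trivial]
      simp only [zero_mul, add_zero]
      exact Finset.sum_congr rfl fun i _ => by rw [pow_succ]; ring
    calc _ = (∑ i ∈ range (m + 1), (i + 1 : ℝ) * c i * x ^ i) +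
          ∑ i ∈ range (m + 1), (if i = 0 then (0:ℝ) else c (i - 1)) * x ^ i := by
            rw [h1, h2]; ring
      _ = _ := by rw [← Finset.sum_add_distrib]; exact Finset.sum_congr rfl fun i _ => by ring
  rw [← key]
  ring

theorem eulerOp_one_iterate_exp (n : ℕ) :
    (eulerOp 1)^[n] Real.exp =
      fun x => (∑ i ∈ Finset.range (n + 1), (stirling2 (n + 1) (i + 1) : ℝ) * x ^ i) *
        Real.exp x := by
  induction n with
  | zero =>
    funext x
    simp [stirling2]
  | succ n ih =>
    rw [Function.iterate_succ_apply', ih,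
      step (fun i => (stirling2 (n + 1) (i + 1) : ℝ)) (n + 1)
        (by show ((stirling2 (n + 1) (n + 2) : ℕ) : ℝ) = 0
            rw [stirling2_eq_zero (n + 1) (n + 2) (by omega)]; norm_num)]
    funext x
    congr 1
    apply Finset.sum_congr rfl
    intro i _
    congr 1
    cases i with
    | zero =>
      have : stirling2 (n + 2) 1 = 1 * stirling2 (n + 1) 1 + stirling2 (n + 1) 0 := rfl
      have h0 : stirling2 (n + 1) 0 = 0 := rfl
      simp only [if_pos rfl, if_true, add_zero]
      show ((0:ℕ) + 1 : ℝ) * (stirling2 (n + 1) (0 + 1) : ℝ) = (stirling2 (n + 1 + 1) (0 + 1) : ℝ)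
      rw [show n + 1 + 1 = n + 2 from rfl, this, h0]
      push_cast
      ring
    | succ j =>
      have : stirling2 (n + 2) (j + 2) = (j + 2) * stirling2 (n + 1) (j + 2) + stirling2 (n + 1) (j + 1) := rfl
      simp only [if_neg (Nat.succ_ne_zero j), Nat.add_sub_cancel]
      show ((j + 1 : ℕ) + 1 : ℝ) * (stirling2 (n + 1) (j + 1 + 1) : ℝ) + (stirling2 (n + 1) (j + 1) : ℝ)
        = (stirling2 (n + 1 + 1) (j + 1 + 1) : ℝ)
      rw [show n + 1 + 1 = n + 2 from rfl, show j + 1 + 1 = j + 2 from rfl, this]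
      push_cast
      ring
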